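/- Let f be σ-strongly convex and L-smooth with minimizer x*, let ℓ_z for z ∈ M_k be L-smooth with average f_k, and suppose f - f_k is c-restricted smooth w.r.t. x*. Then for any y⁰, the average over z ∈ M_k of ‖∇ℓ_z(x*) - ∇ℓ_z(y⁰) + ∇f(y⁰)‖² is at most (L² + 2cL - σ²)·‖y⁰ - x*‖². -/

import Mathlib

open InnerProductSpace

section aux
variable {E : Type*} [NormedAddCommGroup E] [InnerProductSpace ℝ E] [CompleteSpace E]

lemma aux_toDual_gradient (f : E → ℝ) (x : E) :
    (toDual ℝ E) (gradient f x) = fderiv ℝ f x :=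
  (toDual ℝ E).apply_symm_apply _

lemma aux_convex_inner_le {g : E → ℝ} (hcv : ConvexOn ℝ Set.univ g)
    (hd : Differentiable ℝ g) (x y : E) :
    (inner ℝ (gradient g x) (y - x) : ℝ) ≤ g y - g x := by
  set φ : ℝ → ℝ := fun t => g (x + t • (y - x)) with hφ
  have hline : ∀ t : ℝ, HasDerivAt φ
      (inner ℝ (gradient g (x + t • (y - x))) (y - x) : ℝ) t := by
    intro t
    have h1 : HasDerivAt (fun t : ℝ => x + t • (y - x)) (y - x) t := by
      simpa using ((hasDerivAt_id t).smul_const (y - x)).const_add x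
    have h2 := ((hd (x + t • (y - x))).hasFDerivAt).comp_hasDerivAt t h1
    rwa [← aux_toDual_gradient, toDual_apply_apply] at h2
  have hφc : ConvexOn ℝ Set.univ φ := by
    have h := hcv.comp_affineMap (AffineMap.lineMap x y : ℝ →ᵃ[ℝ] E)
    have he : (g ∘ (AffineMap.lineMap x y : ℝ →ᵃ[ℝ] E)) = φ := by
      funext t
      simp [AffineMap.lineMap_apply, hφ, add_comm]
    rw [he, Set.preimage_univ] at h
    exact h
  have hs := hφc.le_slope_of_hasDerivAt (Set.mem_univ (0:ℝ)) (Set.mem_univ (1:ℝ))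
    one_pos (hline 0)
  have hs0 : φ 0 = g x := by simp [hφ]
  have hs1 : φ 1 = g y := by simp [hφ]
  rw [slope_def_field, hs0, hs1] at hs
  simpa using hs

lemma aux_hasGradientAt_half_norm_sq (σ : ℝ) (x : E) :
    HasGradientAt (fun x : E => σ / 2 * ‖x‖ ^ 2) (σ • x) x := by
  have h := ((hasStrictFDerivAt_norm_sq x).hasFDerivAt).const_mul (σ/2)
  have he : (σ/2) • (2 • (innerSL ℝ x)) = toDual ℝ E (σ • x) := by
    ext v
    simp [toDual_apply_apply, real_inner_smul_left, two_smul]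
    ring
  rw [hasGradientAt_iff_hasFDerivAt, ← he]
  exact h

lemma aux_gradient_sub {f g : E → ℝ} (hf : Differentiable ℝ f) (hg : Differentiable ℝ g) (x : E) :
    gradient (fun y => f y - g y) x = gradient f x - gradient g x := by
  have h := ((hf x).hasFDerivAt).sub ((hg x).hasFDerivAt)
  have h2 : HasGradientAt (fun y => f y - g y) (gradient f x - gradient g x) x := by
    rw [hasGradientAt_iff_hasFDerivAt, map_sub, aux_toDual_gradient, aux_toDual_gradient]
    exact h
  exact h2.gradient

end aux

set_option maxHeartbeats 1000000 in
/-- supply-rate bound `S₁` of Lemma 5 (without convexity of the samples). -/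
theorem statement9 {d : ℕ} {ι : Type*} (M : Finset ι) (hM : M.Nonempty)
    (ℓ : ι → EuclideanSpace ℝ (Fin d) → ℝ) (L c σ : ℝ) (hL : 0 ≤ L) (hc : 0 ≤ c) (hσ : 0 < σ)
    (hdiff : ∀ z ∈ M, Differentiable ℝ (ℓ z))
    (hlip : ∀ z ∈ M, LipschitzWith L.toNNReal (gradient (ℓ z)))
    (f fk : EuclideanSpace ℝ (Fin d) → ℝ)
    (hfk : ∀ x, fk x = (∑ z ∈ M, ℓ z x) / M.card)
    (hf : Differentiable ℝ f) (hfkd : Differentiable ℝ fk)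
    (hsc : StrongConvexOn Set.univ σ f)
    (hflip : LipschitzWith L.toNNReal (gradient f))
    (xstar : EuclideanSpace ℝ (Fin d)) (hgrad0 : gradient f xstar = 0)
    (hr : ∀ y, ‖gradient (fun x => f x - fk x) xstar
        - gradient (fun x => f x - fk x) y‖ ≤ c * ‖xstar - y‖)
    (y0 : EuclideanSpace ℝ (Fin d)) :
    (∑ z ∈ M, ‖gradient (ℓ z) xstar - gradient (ℓ z) y0 + gradient f y0‖ ^ 2) / M.card ≤
      (L ^ 2 + 2 * c * L - σ ^ 2) * ‖y0 - xstar‖ ^ 2 := by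
  set n : ℝ := (M.card : ℝ) with hnd
  have hn0 : 0 < n := by
    rw [hnd]; exact_mod_cast Finset.card_pos.mpr hM
  set w : EuclideanSpace ℝ (Fin d) := y0 - xstar with hw
  set g : EuclideanSpace ℝ (Fin d) := gradient f y0 with hg
  set a : ι → EuclideanSpace ℝ (Fin d) :=
    fun z => gradient (ℓ z) xstar - gradient (ℓ z) y0 with ha
  have hLc : (L.toNNReal : ℝ) = L := Real.coe_toNNReal L hL
  -- Lipschitz bounds
  have haz : ∀ z ∈ M, ‖a z‖ ≤ L * ‖w‖ := by
    intro z hz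
    have h := (hlip z hz).dist_le_mul xstar y0
    rw [dist_eq_norm, dist_eq_norm, hLc, norm_sub_rev xstar y0] at h
    exact h
  have hgL : ‖g‖ ≤ L * ‖w‖ := by
    have h := hflip.dist_le_mul y0 xstar
    rw [dist_eq_norm, dist_eq_norm, hLc, hgrad0, sub_zero] at h
    exact h
  -- gradient of fk
  have hgfk : ∀ y, gradient fk y = n⁻¹ • ∑ z ∈ M, gradient (ℓ z) y := by
    intro y
    have hsum : HasFDerivAt (fun x => ∑ z ∈ M, ℓ z x) (∑ z ∈ M, fderiv ℝ (ℓ z) y) y :=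
      HasFDerivAt.fun_sum (fun z hz => ((hdiff z hz) y).hasFDerivAt)
    have hfk2 : fk = fun x => n⁻¹ * ∑ z ∈ M, ℓ z x := by
      funext x; rw [hfk x, div_eq_inv_mul]
    have key : (toDual ℝ (EuclideanSpace ℝ (Fin d))) (n⁻¹ • ∑ z ∈ M, gradient (ℓ z) y)
        = n⁻¹ • ∑ z ∈ M, fderiv ℝ (ℓ z) y := by
      ext v
      simp only [ContinuousLinearMap.coe_smul', Pi.smul_apply, ContinuousLinearMap.coe_sum',
        Finset.sum_apply, toDual_apply_apply, real_inner_smul_left, sum_inner, smul_eq_mul]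
      congr 1
      refine Finset.sum_congr rfl fun z hz => ?_
      rw [← aux_toDual_gradient, toDual_apply_apply]
    have hhg : HasGradientAt fk (n⁻¹ • ∑ z ∈ M, gradient (ℓ z) y) y := by
      rw [hasGradientAt_iff_hasFDerivAt, key, hfk2]
      exact hsum.const_mul n⁻¹
    exact hhg.gradient
  have hsumA : ∑ z ∈ M, a z = n • (gradient fk xstar - gradient fk y0) := by
    rw [Finset.sum_sub_distrib, hgfk, hgfk, smul_sub, smul_smul, smul_smul,
        mul_inv_cancel₀ hn0.ne', one_smul, one_smul]
  -- restricted smoothness bound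
  have hEv : ‖gradient fk xstar - gradient fk y0 + g‖ ≤ c * ‖w‖ := by
    have h := hr y0
    rw [aux_gradient_sub hf hfkd, aux_gradient_sub hf hfkd, hgrad0] at h
    have he : gradient fk xstar - gradient fk y0 + g
        = -((0 - gradient fk xstar) - (gradient f y0 - gradient fk y0)) := by
      rw [hg]; abel
    rw [he, norm_neg]
    rw [hw, norm_sub_rev y0 xstar]
    exact h
  -- strong convexity: gradient lower bound
  have hq : Differentiable ℝ (fun x : EuclideanSpace ℝ (Fin d) => σ/2 * ‖x‖^2) :=
    fun x => (aux_hasGradientAt_half_norm_sq σ x).differentiableAt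
  have hconv : ConvexOn ℝ Set.univ
      (fun x : EuclideanSpace ℝ (Fin d) => f x - σ/2 * ‖x‖^2) :=
    strongConvexOn_iff_convex.mp hsc
  have hgradh : ∀ x : EuclideanSpace ℝ (Fin d),
      gradient (fun y => f y - σ/2 * ‖y‖^2) x = gradient f x - σ • x := by
    intro x
    rw [aux_gradient_sub hf hq, (aux_hasGradientAt_half_norm_sq σ x).gradient]
  have h1 := aux_convex_inner_le hconv (hf.sub hq) xstar y0
  have h2 := aux_convex_inner_le hconv (hf.sub hq) y0 xstar
  rw [hgradh, hgrad0, zero_sub] at h1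
  rw [hgradh] at h2
  have hmono : σ * ‖w‖^2 ≤ (inner ℝ g w : ℝ) := by
    have hh := add_le_add h1 h2
    have e1 : (inner ℝ (-(σ • xstar)) (y0 - xstar) : ℝ) = -(σ * inner ℝ xstar w) := by
      rw [← hw, inner_neg_left, real_inner_smul_left]
    have e2 : (inner ℝ (gradient f y0 - σ • y0) (xstar - y0) : ℝ)
        = -(inner ℝ g w : ℝ) + σ * inner ℝ y0 w := by
      have : xstar - y0 = -w := by rw [hw]; abel
      rw [this, inner_neg_right, inner_sub_left, real_inner_smul_left, ← hg]
      ring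
    have e3 : (inner ℝ y0 w : ℝ) - inner ℝ xstar w = ‖w‖^2 := by
      rw [← inner_sub_left, ← hw, real_inner_self_eq_norm_sq]
    rw [e1, e2] at hh
    nlinarith [hh, e3]
  have hgsq : σ^2 * ‖w‖^2 ≤ ‖g‖^2 := by
    rcases eq_or_lt_of_le (norm_nonneg w) with h0 | h0
    · simp [← h0]
    · have h4 : σ * ‖w‖ ≤ ‖g‖ := by
        have h5 := real_inner_le_norm g w
        nlinarith [hmono]
      nlinarith [mul_le_mul h4 h4 (by positivity) (norm_nonneg g)]
  -- expansion
  have hexp : ∑ z ∈ M, ‖a z + g‖^2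
      = ∑ z ∈ M, ‖a z‖^2 + 2 * (inner ℝ (∑ z ∈ M, a z) g : ℝ) + n * ‖g‖^2 := by
    have hpt : ∀ z ∈ M, ‖a z + g‖^2 = ‖a z‖^2 + (2 * (inner ℝ (a z) g : ℝ) + ‖g‖^2) := by
      intro z _
      have := norm_add_sq_real (a z) g
      linarith [this]
    rw [Finset.sum_congr rfl hpt, Finset.sum_add_distrib, Finset.sum_add_distrib,
        ← Finset.mul_sum, ← sum_inner, Finset.sum_const, nsmul_eq_mul]
    ring
  have hA : ∑ z ∈ M, ‖a z‖^2 ≤ n * (L * ‖w‖)^2 := by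
    calc ∑ z ∈ M, ‖a z‖^2 ≤ ∑ _z ∈ M, (L * ‖w‖)^2 :=
          Finset.sum_le_sum (fun z hz => pow_le_pow_left₀ (norm_nonneg _) (haz z hz) 2)
      _ = n * (L * ‖w‖)^2 := by rw [Finset.sum_const, nsmul_eq_mul]
  have hcross : (inner ℝ (∑ z ∈ M, a z) g : ℝ) ≤ n * ((c * ‖w‖) * (L * ‖w‖) - ‖g‖^2) := by
    rw [hsumA, real_inner_smul_left]
    have hDg : (inner ℝ (gradient fk xstar - gradient fk y0) g : ℝ)
        = inner ℝ (gradient fk xstar - gradient fk y0 + g) g - ‖g‖^2 := by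
      rw [inner_add_left, real_inner_self_eq_norm_sq]
      ring
    rw [hDg]
    have hEg : (inner ℝ (gradient fk xstar - gradient fk y0 + g) g : ℝ)
        ≤ (c * ‖w‖) * (L * ‖w‖) := by
      calc (inner ℝ (gradient fk xstar - gradient fk y0 + g) g : ℝ)
          ≤ ‖gradient fk xstar - gradient fk y0 + g‖ * ‖g‖ := real_inner_le_norm _ _
        _ ≤ (c * ‖w‖) * (L * ‖w‖) := by
            apply mul_le_mul hEv hgL (norm_nonneg _)
            positivity
    nlinarith [hEg]
  -- conclude
  rw [div_le_iff₀ hn0]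
  have hgoal : ∑ z ∈ M, ‖a z + g‖^2 ≤ (L^2 + 2*c*L - σ^2) * ‖w‖^2 * n := by
    rw [hexp]
    nlinarith [hA, hcross, hgsq, hn0, mul_le_mul_of_nonneg_left hgsq hn0.le]
  exact hgoal
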